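/- Let T1, T2 be q-commuting contractions on H and (F; Λ, P, U) a special Andô tuple for (T1, T2). Then T1*T1 + D_T Λ* U* P U Λ D_T = I and T2*T2 + D_T Λ* P^⊥ Λ D_T = I. -/

import Mathlib

set_option synthInstance.maxHeartbeats 1000000
set_option maxHeartbeats 2000000

open ContinuousLinearMap

/-- The `ℓ²`-sum of three copies of a complete space is complete (the uniform structure of
`PiLp` is definitionally that of the product). -/
instance piLpThreeCompleteSpace {H : Type*} [NormedAddCommGroup H] [CompleteSpace H] :
    CompleteSpace (PiLp 2 fun _ : Fin 3 => H) :=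
  inferInstance

/-- For a special Andô tuple `(F; Λ, P, U)` of a `q`-commuting contractive pair `(T1, T2)`
(with `F = 𝒟_{T1} ⊕ 𝒟_{T2} ⊕ H` realized inside `H ⊕₂ H ⊕₂ H`, `Λ D_T h = (D_{T1}T2 h, D_{T2}h, 0)`,
`U` the unitary extending `(D_{T1}T2 h, D_{T2}h, 0) ↦ (D_{T1}h, D_{T2}T1 h, 0)` and `P` the
projection onto the first summand), writing `K = Λ D_T`, one has
`T1* T1 + D_T Λ* U* P U Λ D_T = 1` and `T2* T2 + D_T Λ* P^⊥ Λ D_T = 1`. -/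
theorem special_Ando_tuple_identities_one
    {H : Type*} [NormedAddCommGroup H] [InnerProductSpace ℂ H] [CompleteSpace H]
    (q : ℂ) (hq : ‖q‖ = 1)
    (T1 T2 : H →L[ℂ] H) (hT1 : ‖T1‖ ≤ 1) (hT2 : ‖T2‖ ≤ 1)
    (hcomm : T1 * T2 = q • (T2 * T1))
    (DT DT1 DT2 : H →L[ℂ] H)
    (hDT : DT.IsPositive) (hDT1 : DT1.IsPositive) (hDT2 : DT2.IsPositive)
    (hDTsq : DT * DT = 1 - adjoint (T1 * T2) * (T1 * T2))
    (hDT1sq : DT1 * DT1 = 1 - adjoint T1 * T1)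
    (hDT2sq : DT2 * DT2 = 1 - adjoint T2 * T2)
    (P U : PiLp 2 (fun _ : Fin 3 => H) →L[ℂ] PiLp 2 (fun _ : Fin 3 => H))
    (hP : ∀ v : PiLp 2 (fun _ : Fin 3 => H),
      P v = (WithLp.equiv 2 (Fin 3 → H)).symm ![(WithLp.equiv 2 (Fin 3 → H)) v 0, 0, 0])
    (hUuni : adjoint U ∘L U = 1 ∧ U ∘L adjoint U = 1)
    (hUact : ∀ h : H,
      U ((WithLp.equiv 2 (Fin 3 → H)).symm ![DT1 (T2 h), DT2 h, 0])
        = (WithLp.equiv 2 (Fin 3 → H)).symm ![DT1 h, DT2 (T1 h), 0])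
    -- K = Λ ∘ D_T
    (K : H →L[ℂ] PiLp 2 (fun _ : Fin 3 => H))
    (hK : ∀ h : H, K h = (WithLp.equiv 2 (Fin 3 → H)).symm ![DT1 (T2 h), DT2 h, 0]) :
    adjoint T1 ∘L T1 + adjoint K ∘L adjoint U ∘L P ∘L U ∘L K = 1 ∧
    adjoint T2 ∘L T2 + adjoint K ∘L (1 - P) ∘L K = 1 := by

  have hDT1sa : ContinuousLinearMap.adjoint DT1 = DT1 := hDT1.isSelfAdjoint.adjoint_eq
  have hDT2sa : ContinuousLinearMap.adjoint DT2 = DT2 := hDT2.isSelfAdjoint.adjoint_eq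
  constructor
  · ext x
    refine ext_inner_right ℂ fun y => ?_
    have h2 : (inner ℂ (adjoint K (adjoint U (P (U (K x))))) y : ℂ)
        = inner ℂ (DT1 (DT1 x)) y := by
      rw [adjoint_inner_left, adjoint_inner_left, hK x, hUact x, hP, hK y, hUact y]
      simp only [Equiv.apply_symm_apply, Matrix.cons_val_zero]
      simp only [PiLp.inner_apply, Fin.sum_univ_three, WithLp.equiv_symm_apply, WithLp.ofLp_toLp,
        Matrix.cons_val_zero, Matrix.cons_val_one, Matrix.head_cons, Matrix.cons_val_two,
        Matrix.tail_cons, inner_zero_left, add_zero]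
      rw [← adjoint_inner_left, hDT1sa]
    have h1 : (inner ℂ (adjoint T1 (T1 x)) y : ℂ) = inner ℂ (T1 x) (T1 y) :=
      adjoint_inner_left _ _ _
    have hsq : DT1 (DT1 x) = x - adjoint T1 (T1 x) := by
      have := congrArg (fun A : H →L[ℂ] H => A x) hDT1sq
      simpa using this
    simp only [ContinuousLinearMap.add_apply, ContinuousLinearMap.comp_apply,
      inner_add_left, h2, hsq, inner_sub_left, h1, ContinuousLinearMap.one_apply]
    ring
  · ext x
    refine ext_inner_right ℂ fun y => ?_
    have h2 : (inner ℂ (adjoint K ((1 - P) (K x))) y : ℂ)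
        = inner ℂ (DT2 (DT2 x)) y := by
      rw [adjoint_inner_left, hK x, hK y]
      simp only [ContinuousLinearMap.sub_apply, ContinuousLinearMap.one_apply, hP,
        Equiv.apply_symm_apply, Matrix.cons_val_zero]
      simp only [PiLp.inner_apply, Fin.sum_univ_three, WithLp.equiv_symm_apply, WithLp.ofLp_toLp,
        Matrix.cons_val_zero, Matrix.cons_val_one, Matrix.head_cons, Matrix.cons_val_two,
        Matrix.tail_cons, Pi.sub_apply, inner_zero_left, inner_sub_left, add_zero, sub_self,
        zero_add, sub_zero]
      rw [add_sub_cancel_left, ← adjoint_inner_left, hDT2sa]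
    have h1 : (inner ℂ (adjoint T2 (T2 x)) y : ℂ) = inner ℂ (T2 x) (T2 y) :=
      adjoint_inner_left _ _ _
    have hsq : DT2 (DT2 x) = x - adjoint T2 (T2 x) := by
      have := congrArg (fun A : H →L[ℂ] H => A x) hDT2sq
      simpa using this
    simp only [ContinuousLinearMap.add_apply, ContinuousLinearMap.comp_apply,
      inner_add_left, h2, hsq, inner_sub_left, h1, ContinuousLinearMap.one_apply]
    ring
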